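/- Let n ≥ 1, let k : ℂ → M_n(ℂ), τ : ℂ → ℂ, and let r̄ : ℂ×ℂ → M_{n²}(ℂ) satisfy the compact form of the N-reflection equation: r̄(λ,ν)·(k(λ) ⊗ 1_n) = (k(λ) ⊗ 1_n)·r̄(τ(λ),ν) for all λ,ν. Let B : ℂ → M_n(ℂ) be any matrix-valued function, p ≥ 1 an integer, and define M(λ,ν) = p·tr_a( (B(λ) ⊗ 1_n)^{p−1} · P·r̄(ν,λ)·P ) ∈ M_n(ℂ), where tr_a denotes the partial trace over the first tensor factor. Then for all λ,ν: M(λ,ν)·k(ν) = k(ν)·M(λ,τ(ν)). -/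
import Mathlib


open Matrix Kronecker

noncomputable section

/-- `x_a = x ⊗ 1`, acting on `ℂ^n ⊗ ℂ^n`. -/
def legA (n : ℕ) (x : Matrix (Fin n) (Fin n) ℂ) :
    Matrix (Fin n × Fin n) (Fin n × Fin n) ℂ :=
  x ⊗ₖ (1 : Matrix (Fin n) (Fin n) ℂ)

/-- The swap (permutation) matrix `P : P(u ⊗ v) = v ⊗ u`. -/
def Pmat (n : ℕ) : Matrix (Fin n × Fin n) (Fin n × Fin n) ℂ :=
  Matrix.of fun i j => if i.1 = j.2 ∧ i.2 = j.1 then 1 else 0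

/-- Partial trace over the first tensor factor: `(tr_a Z)_{jl} = ∑_i Z_{(i,j),(i,l)}`. -/
def ptrA (n : ℕ) (Z : Matrix (Fin n × Fin n) (Fin n × Fin n) ℂ) :
    Matrix (Fin n) (Fin n) ℂ :=
  Matrix.of fun j l => ∑ i : Fin n, Z (i, j) (i, l)

/-- `M(λ,ν) = p · tr_a((B(λ) ⊗ 1)^{p-1} · P r̄(ν,λ) P)`. -/
def Mop (n : ℕ) (rb : ℂ → ℂ → Matrix (Fin n × Fin n) (Fin n × Fin n) ℂ)
    (B : ℂ → Matrix (Fin n) (Fin n) ℂ) (p : ℕ) (lam ν : ℂ) :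
    Matrix (Fin n) (Fin n) ℂ :=
  (p : ℂ) • ptrA n ((legA n (B lam)) ^ (p - 1) * (Pmat n * rb ν lam * Pmat n))

/-- `x_b = 1 ⊗ x`. -/
def legB (n : ℕ) (x : Matrix (Fin n) (Fin n) ℂ) :
    Matrix (Fin n × Fin n) (Fin n × Fin n) ℂ :=
  (1 : Matrix (Fin n) (Fin n) ℂ) ⊗ₖ x

lemma ptrA_mul_legB (n : ℕ) (Z : Matrix (Fin n × Fin n) (Fin n × Fin n) ℂ)
    (x : Matrix (Fin n) (Fin n) ℂ) :
    ptrA n (Z * legB n x) = ptrA n Z * x := by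
  ext j l
  simp only [ptrA, legB, Matrix.mul_apply, Matrix.of_apply, kroneckerMap_apply,
    Matrix.one_apply, Fintype.sum_prod_type, ite_mul, one_mul, zero_mul, mul_ite,
    mul_one, mul_zero, Finset.sum_ite_eq, Finset.sum_ite_eq', Finset.mem_univ, if_true,
    Finset.sum_mul]
  simp only [Finset.sum_ite_irrel, Finset.sum_const_zero, Finset.sum_ite_eq,
    Finset.sum_ite_eq', Finset.mem_univ, if_true]
  rw [Finset.sum_comm]

lemma ptrA_legB_mul (n : ℕ) (Z : Matrix (Fin n × Fin n) (Fin n × Fin n) ℂ)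
    (x : Matrix (Fin n) (Fin n) ℂ) :
    ptrA n (legB n x * Z) = x * ptrA n Z := by
  ext j l
  simp only [ptrA, legB, Matrix.mul_apply, Matrix.of_apply, kroneckerMap_apply,
    Matrix.one_apply, Fintype.sum_prod_type, ite_mul, one_mul, zero_mul, mul_ite,
    mul_one, mul_zero, Finset.sum_ite_eq, Finset.sum_ite_eq', Finset.mem_univ, if_true,
    Finset.mul_sum]
  simp only [Finset.sum_ite_irrel, Finset.sum_const_zero, Finset.sum_ite_eq,
    Finset.sum_ite_eq', Finset.mem_univ, if_true]
  rw [Finset.sum_comm]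

lemma Pmat_mul_Pmat (n : ℕ) : Pmat n * Pmat n = 1 := by
  ext ⟨i, j⟩ ⟨a, b⟩
  simp only [Pmat, Matrix.mul_apply, Matrix.of_apply, Fintype.sum_prod_type,
    Matrix.one_apply]
  simp [ite_and, Finset.sum_ite_eq, Prod.ext_iff, eq_comm]

lemma Pmat_legA (n : ℕ) (x : Matrix (Fin n) (Fin n) ℂ) :
    Pmat n * legA n x = legB n x * Pmat n := by
  ext ⟨i, j⟩ ⟨a, b⟩
  simp only [Pmat, legA, legB, Matrix.mul_apply, Matrix.of_apply, Fintype.sum_prod_type,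
    kroneckerMap_apply, Matrix.one_apply]
  simp [ite_and, Finset.sum_ite_eq, Finset.sum_ite_eq', mul_comm]

lemma Pmat_legB (n : ℕ) (x : Matrix (Fin n) (Fin n) ℂ) :
    Pmat n * legB n x = legA n x * Pmat n := by
  ext ⟨i, j⟩ ⟨a, b⟩
  simp only [Pmat, legA, legB, Matrix.mul_apply, Matrix.of_apply, Fintype.sum_prod_type,
    kroneckerMap_apply, Matrix.one_apply]
  simp [ite_and, Finset.sum_ite_eq, Finset.sum_ite_eq', mul_comm]

lemma legA_mul_legB (n : ℕ) (x y : Matrix (Fin n) (Fin n) ℂ) :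
    legA n x * legB n y = legB n y * legA n x := by
  simp only [legA, legB, ← Matrix.mul_kronecker_mul, Matrix.one_mul, Matrix.mul_one]

lemma legA_pow (n : ℕ) (x : Matrix (Fin n) (Fin n) ℂ) (m : ℕ) :
    legA n x ^ m = legA n (x ^ m) := by
  induction m with
  | zero => simp [legA, Matrix.one_kronecker_one]
  | succ m ih =>
    rw [pow_succ, pow_succ, ih]
    simp only [legA, ← Matrix.mul_kronecker_mul, Matrix.one_mul]

lemma legA_pow_mul_legB (n : ℕ) (x y : Matrix (Fin n) (Fin n) ℂ) (m : ℕ) :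
    legA n x ^ m * legB n y = legB n y * legA n x ^ m := by
  rw [legA_pow, legA_mul_legB]

/-- If `r̄` satisfies the compact form of the `N`-reflection equation
`r̄(λ,ν) k_a(λ) = k_a(λ) r̄(τ(λ),ν)`, then `M(λ,ν) k(ν) = k(ν) M(λ,τ(ν))`. -/
theorem stmt17 (n : ℕ) (hn : 1 ≤ n)
    (k : ℂ → Matrix (Fin n) (Fin n) ℂ) (τ : ℂ → ℂ)
    (rb : ℂ → ℂ → Matrix (Fin n × Fin n) (Fin n × Fin n) ℂ)
    (hcompact : ∀ lam ν : ℂ, rb lam ν * legA n (k lam) = legA n (k lam) * rb (τ lam) ν)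
    (B : ℂ → Matrix (Fin n) (Fin n) ℂ) (p : ℕ) (hp : 1 ≤ p) :
    ∀ lam ν : ℂ, Mop n rb B p lam ν * k ν = k ν * Mop n rb B p lam (τ ν) := by
  intro lam ν
  unfold Mop
  rw [Matrix.smul_mul, Matrix.mul_smul, ← ptrA_mul_legB, ← ptrA_legB_mul]
  have key : Pmat n * rb ν lam * Pmat n * legB n (k ν)
      = legB n (k ν) * (Pmat n * rb (τ ν) lam * Pmat n) := by
    calc Pmat n * rb ν lam * Pmat n * legB n (k ν)
        = Pmat n * (rb ν lam * legA n (k ν)) * Pmat n := by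
          rw [mul_assoc (Pmat n * rb ν lam), Pmat_legB, ← mul_assoc, ← mul_assoc,
            mul_assoc (Pmat n)]
      _ = Pmat n * legA n (k ν) * (rb (τ ν) lam * Pmat n) := by
          rw [hcompact ν lam, ← mul_assoc, ← mul_assoc]
      _ = legB n (k ν) * (Pmat n * rb (τ ν) lam * Pmat n) := by
          rw [Pmat_legA, mul_assoc, ← mul_assoc (Pmat n), ← mul_assoc]
  have main : legA n (B lam) ^ (p - 1) * (Pmat n * rb ν lam * Pmat n) * legB n (k ν)
      = legB n (k ν) * (legA n (B lam) ^ (p - 1) * (Pmat n * rb (τ ν) lam * Pmat n)) :=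
    calc legA n (B lam) ^ (p - 1) * (Pmat n * rb ν lam * Pmat n) * legB n (k ν)
      = legA n (B lam) ^ (p - 1) * (Pmat n * rb ν lam * Pmat n * legB n (k ν)) :=
        mul_assoc _ _ _
    _ = legA n (B lam) ^ (p - 1) * (legB n (k ν) * (Pmat n * rb (τ ν) lam * Pmat n)) := by
        rw [key]
    _ = legB n (k ν) * (legA n (B lam) ^ (p - 1) * (Pmat n * rb (τ ν) lam * Pmat n)) := by
        rw [← mul_assoc, legA_pow_mul_legB, mul_assoc]
  rw [main]
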